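/- MPL[E] is strictly more expressive than HyperCTL*, even when restricted to bisimulation-invariant properties: there exists a closed MPL[E] sentence ψ whose class of AP-labeled tree models is bisimulation-invariant, such that no HyperCTL* formula φ satisfies (for every AP-labeled tree T, T ⊨ φ iff T ⊨ ψ). -/

import Mathlib

set_option linter.unusedVariables false

/-- A trace over a set `AP` of atomic propositions: an infinite sequence of subsets of `AP`. -/
abbrev Trace (AP : Type) := ℕ → Set AP

/-! ### HyperQPTL -/

inductive HQPTL (AP : Type) : Type
  | atom  : AP → ℕ → HQPTL AP          -- a_π
  | prop  : ℕ → HQPTL AP               -- q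
  | not   : HQPTL AP → HQPTL AP
  | or    : HQPTL AP → HQPTL AP → HQPTL AP
  | next  : HQPTL AP → HQPTL AP
  | untl  : HQPTL AP → HQPTL AP → HQPTL AP
  | exTr  : ℕ → HQPTL AP → HQPTL AP    -- ∃π
  | allTr : ℕ → HQPTL AP → HQPTL AP    -- ∀π
  | exPr  : ℕ → HQPTL AP → HQPTL AP    -- ∃q
  | allPr : ℕ → HQPTL AP → HQPTL AP    -- ∀q

namespace HQPTL

variable {AP : Type}

/-- Satisfaction `Π,i ⊨_T φ` for HyperQPTL.  `V` assigns traces (in `T`) to trace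
variables, `P` assigns to each propositional variable a trace over `{q}`
(modelled as `ℕ → Prop`). -/
def sat (T : Set (Trace AP)) : (ℕ → Trace AP) → (ℕ → ℕ → Prop) → ℕ → HQPTL AP → Prop
  | V, P, i, atom a π => a ∈ V π i
  | V, P, i, prop q => P q i
  | V, P, i, not φ => ¬ sat T V P i φ
  | V, P, i, or φ ψ => sat T V P i φ ∨ sat T V P i ψ
  | V, P, i, next φ => sat T V P (i + 1) φ
  | V, P, i, untl φ ψ =>
      ∃ j, i ≤ j ∧ sat T V P j ψ ∧ ∀ k, i ≤ k → k < j → sat T V P k φ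
  | V, P, i, exTr π φ => ∃ t ∈ T, sat T (Function.update V π t) P i φ
  | V, P, i, allTr π φ => ∀ t ∈ T, sat T (Function.update V π t) P i φ
  | V, P, i, exPr q φ => ∃ p : ℕ → Prop, sat T V (Function.update P q p) i φ
  | V, P, i, allPr q φ => ∀ p : ℕ → Prop, sat T V (Function.update P q p) i φ

/-- `T ⊨ φ`: satisfaction at time 0 with the empty (default) assignment. -/
def models (T : Set (Trace AP)) (φ : HQPTL AP) : Prop :=
  sat T (fun _ _ => (∅ : Set AP)) (fun _ _ => False) 0 φ

/-- quantifier-free HyperQPTL formulas -/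
def qfree : HQPTL AP → Prop
  | atom _ _ => True
  | prop _ => True
  | not φ => qfree φ
  | or φ ψ => qfree φ ∧ qfree ψ
  | next φ => qfree φ
  | untl φ ψ => qfree φ ∧ qfree ψ
  | _ => False

/-- prenex form: a prefix of (trace or propositional) quantifiers followed by a
quantifier-free body; this is exactly the shape of formulas produced by the
HyperQPTL grammar. -/
def prenex : HQPTL AP → Prop
  | exTr _ φ => prenex φ
  | allTr _ φ => prenex φ
  | exPr _ φ => prenex φ
  | allPr _ φ => prenex φ
  | φ => qfree φ

/-- the ∀* fragment: only universal trace quantifiers in the prefix,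
propositional quantifiers may occur arbitrarily in the prefix. -/
def allFrag : HQPTL AP → Prop
  | allTr _ φ => allFrag φ
  | exPr _ φ => allFrag φ
  | allPr _ φ => allFrag φ
  | φ => qfree φ

/-- trailing block `Q⃗₂ ψ` of propositional quantifiers over a quantifier-free body -/
def eaFrag4 : HQPTL AP → Prop
  | exPr _ φ => eaFrag4 φ
  | allPr _ φ => eaFrag4 φ
  | φ => qfree φ

/-- `∀π′₁…∀π′ₘ Q⃗₂ ψ` -/
def eaFrag3 : HQPTL AP → Prop
  | allTr _ φ => eaFrag3 φ
  | φ => eaFrag4 φ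

/-- `Q⃗₁ ∀π′₁…∀π′ₘ Q⃗₂ ψ` -/
def eaFrag2 : HQPTL AP → Prop
  | exPr _ φ => eaFrag2 φ
  | allPr _ φ => eaFrag2 φ
  | φ => eaFrag3 φ

/-- `∃π₁…∃πₙ Q⃗₁ ∀π′₁…∀π′ₘ Q⃗₂ ψ` -/
def eaFrag1 : HQPTL AP → Prop
  | exTr _ φ => eaFrag1 φ
  | φ => eaFrag2 φ

/-- the ∃*∀* fragment: `Q⃗₀ ∃π₁…∃πₙ Q⃗₁ ∀π′₁…∀π′ₘ Q⃗₂ ψ` with `ψ` quantifier-free -/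
def eaFrag : HQPTL AP → Prop
  | exPr _ φ => eaFrag φ
  | allPr _ φ => eaFrag φ
  | φ => eaFrag1 φ

/-- a HyperQPTL formula is satisfiable if some nonempty trace set satisfies it -/
def satisfiable (φ : HQPTL AP) : Prop :=
  ∃ T : Set (Trace AP), T.Nonempty ∧ models T φ

/-- a natural injective encoding of HyperQPTL formulas over `Fin k` as naturals -/
def enc {k : ℕ} : HQPTL (Fin k) → ℕ
  | atom a π => Nat.pair 0 (Nat.pair a.val π)
  | prop q => Nat.pair 1 q
  | not φ => Nat.pair 2 (enc φ)
  | or φ ψ => Nat.pair 3 (Nat.pair (enc φ) (enc ψ))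
  | next φ => Nat.pair 4 (enc φ)
  | untl φ ψ => Nat.pair 5 (Nat.pair (enc φ) (enc ψ))
  | exTr π φ => Nat.pair 6 (Nat.pair π (enc φ))
  | allTr π φ => Nat.pair 7 (Nat.pair π (enc φ))
  | exPr q φ => Nat.pair 8 (Nat.pair q (enc φ))
  | allPr q φ => Nat.pair 9 (Nat.pair q (enc φ))

end HQPTL

/-! ### QPTL -/

inductive QPTL (AP : Type) : Type
  | atom  : AP → QPTL AP
  | prop  : ℕ → QPTL AP
  | not   : QPTL AP → QPTL AP
  | or    : QPTL AP → QPTL AP → QPTL AP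
  | next  : QPTL AP → QPTL AP
  | untl  : QPTL AP → QPTL AP → QPTL AP
  | exPr  : ℕ → QPTL AP → QPTL AP
  | allPr : ℕ → QPTL AP → QPTL AP

namespace QPTL

variable {AP : Type}

/-- QPTL satisfaction over a single trace `t`. -/
def sat (t : Trace AP) : (ℕ → ℕ → Prop) → ℕ → QPTL AP → Prop
  | P, i, atom a => a ∈ t i
  | P, i, prop q => P q i
  | P, i, not φ => ¬ sat t P i φ
  | P, i, or φ ψ => sat t P i φ ∨ sat t P i ψ
  | P, i, next φ => sat t P (i + 1) φ
  | P, i, untl φ ψ => ∃ j, i ≤ j ∧ sat t P j ψ ∧ ∀ k, i ≤ k → k < j → sat t P k φ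
  | P, i, exPr q φ => ∃ p : ℕ → Prop, sat t (Function.update P q p) i φ
  | P, i, allPr q φ => ∀ p : ℕ → Prop, sat t (Function.update P q p) i φ

def models (t : Trace AP) (φ : QPTL AP) : Prop :=
  sat t (fun _ _ => False) 0 φ

def satisfiable (φ : QPTL AP) : Prop := ∃ t : Trace AP, models t φ

end QPTL

/-- The QPTL formula obtained from a HyperQPTL formula by removing all trace
quantifiers and replacing every atom `a_π` by the atom `a`. -/
def HQPTL.strip {AP : Type} : HQPTL AP → QPTL AP
  | .atom a _ => .atom a
  | .prop q => .prop q
  | .not φ => .not φ.strip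
  | .or φ ψ => .or φ.strip ψ.strip
  | .next φ => .next φ.strip
  | .untl φ ψ => .untl φ.strip ψ.strip
  | .exTr _ φ => φ.strip
  | .allTr _ φ => φ.strip
  | .exPr q φ => .exPr q φ.strip
  | .allPr q φ => .allPr q φ.strip

/-! ### FO[<,E] -/

inductive FOE (AP : Type) : Type
  | patom : AP → ℕ → FOE AP            -- P_a(x)
  | lt    : ℕ → ℕ → FOE AP             -- x < y
  | eq    : ℕ → ℕ → FOE AP             -- x = y
  | el    : ℕ → ℕ → FOE AP             -- E(x,y)
  | not   : FOE AP → FOE AP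
  | or    : FOE AP → FOE AP → FOE AP
  | ex    : ℕ → FOE AP → FOE AP        -- ∃x

namespace FOE

variable {AP : Type}

/-- First-order satisfaction over a trace set `T`; first-order variables range
over `T × ℕ`, modelled by valuations `v : ℕ → Trace AP × ℕ` (quantifiers
restrict the first component to `T`). -/
def sat (T : Set (Trace AP)) : (ℕ → Trace AP × ℕ) → FOE AP → Prop
  | v, patom a x => a ∈ (v x).1 (v x).2
  | v, lt x y => (v x).1 = (v y).1 ∧ (v x).2 < (v y).2
  | v, eq x y => v x = v y
  | v, el x y => (v x).2 = (v y).2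
  | v, not φ => ¬ sat T v φ
  | v, or φ ψ => sat T v φ ∨ sat T v ψ
  | v, ex x φ => ∃ p : Trace AP × ℕ, p.1 ∈ T ∧ sat T (Function.update v x p) φ

def free : FOE AP → Finset ℕ
  | patom _ x => {x}
  | lt x y => {x, y}
  | eq x y => {x, y}
  | el x y => {x, y}
  | not φ => free φ
  | or φ ψ => free φ ∪ free ψ
  | ex x φ => (free φ).erase x

def closed (φ : FOE AP) : Prop := φ.free = ∅

def models (T : Set (Trace AP)) (φ : FOE AP) : Prop :=
  sat T (fun _ => (fun _ => (∅ : Set AP), 0)) φ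

end FOE

/-! ### S1S[E] -/

inductive S1STerm : Type
  | var  : ℕ → S1STerm
  | min  : ℕ → S1STerm
  | succ : S1STerm → S1STerm

namespace S1STerm

/-- value of an S1S[E] term under a first-order valuation -/
def val {AP : Type} (v : ℕ → Trace AP × ℕ) : S1STerm → Trace AP × ℕ
  | var x => v x
  | min x => ((v x).1, 0)
  | succ τ => ((val v τ).1, (val v τ).2 + 1)

def fv : S1STerm → Finset ℕ
  | var x => {x}
  | min x => {x}
  | succ τ => fv τ

def enc : S1STerm → ℕ
  | var x => Nat.pair 0 x
  | min x => Nat.pair 1 x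
  | succ τ => Nat.pair 2 τ.enc

end S1STerm

/-- S1S[E] formulas: second-order variables are either quantifiable variables
(indexed by `ℕ`, via `Sum.inl`) or the designated free variables `X_a`
for `a ∈ AP` (via `Sum.inr`). -/
inductive S1SE (AP : Type) : Type
  | mem  : S1STerm → ℕ ⊕ AP → S1SE AP   -- τ ∈ X
  | eq   : S1STerm → S1STerm → S1SE AP   -- τ = τ'
  | el   : S1STerm → S1STerm → S1SE AP   -- E(τ,τ')
  | not  : S1SE AP → S1SE AP
  | or   : S1SE AP → S1SE AP → S1SE AP
  | exFO : ℕ → S1SE AP → S1SE AP         -- ∃x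
  | exSO : ℕ → S1SE AP → S1SE AP         -- ∃X

namespace S1SE

variable {AP : Type}

/-- S1S[E] satisfaction over a trace set `T`: first-order variables range over
`T × ℕ`, second-order variables over subsets of `T × ℕ`; each designated
variable `X_a` is interpreted as `{(t,n) ∈ T × ℕ | a ∈ t[n]}`. -/
def sat (T : Set (Trace AP)) :
    (ℕ → Trace AP × ℕ) → (ℕ → Set (Trace AP × ℕ)) → S1SE AP → Prop
  | v1, v2, mem τ (Sum.inl X) => τ.val v1 ∈ v2 X
  | v1, v2, mem τ (Sum.inr a) =>
      (τ.val v1).1 ∈ T ∧ a ∈ (τ.val v1).1 (τ.val v1).2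
  | v1, v2, eq τ σ => τ.val v1 = σ.val v1
  | v1, v2, el τ σ => (τ.val v1).2 = (σ.val v1).2
  | v1, v2, not φ => ¬ sat T v1 v2 φ
  | v1, v2, or φ ψ => sat T v1 v2 φ ∨ sat T v1 v2 ψ
  | v1, v2, exFO x φ =>
      ∃ p : Trace AP × ℕ, p.1 ∈ T ∧ sat T (Function.update v1 x p) v2 φ
  | v1, v2, exSO X φ =>
      ∃ A : Set (Trace AP × ℕ), (∀ p ∈ A, p.1 ∈ T) ∧
        sat T v1 (Function.update v2 X A) φ

def freeFO : S1SE AP → Finset ℕ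
  | mem τ _ => τ.fv
  | eq τ σ => τ.fv ∪ σ.fv
  | el τ σ => τ.fv ∪ σ.fv
  | not φ => freeFO φ
  | or φ ψ => freeFO φ ∪ freeFO ψ
  | exFO x φ => (freeFO φ).erase x
  | exSO _ φ => freeFO φ

def freeSO : S1SE AP → Finset ℕ
  | mem _ (Sum.inl X) => {X}
  | mem _ (Sum.inr _) => ∅
  | eq _ _ => ∅
  | el _ _ => ∅
  | not φ => freeSO φ
  | or φ ψ => freeSO φ ∪ freeSO ψ
  | exFO _ φ => freeSO φ
  | exSO X φ => (freeSO φ).erase X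

/-- a closed S1S[E] formula: free variables only among the `X_a` -/
def closed (φ : S1SE AP) : Prop := φ.freeFO = ∅ ∧ φ.freeSO = ∅

def models (T : Set (Trace AP)) (φ : S1SE AP) : Prop :=
  sat T (fun _ => (fun _ => (∅ : Set AP), 0)) (fun _ => (∅ : Set (Trace AP × ℕ))) φ

/-- a natural injective encoding of S1S[E] formulas over `Fin k` as naturals -/
def enc {k : ℕ} : S1SE (Fin k) → ℕ
  | mem τ (Sum.inl X) => Nat.pair 0 (Nat.pair τ.enc X)
  | mem τ (Sum.inr a) => Nat.pair 1 (Nat.pair τ.enc a.val)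
  | eq τ σ => Nat.pair 2 (Nat.pair τ.enc σ.enc)
  | el τ σ => Nat.pair 3 (Nat.pair τ.enc σ.enc)
  | not φ => Nat.pair 4 φ.enc
  | or φ ψ => Nat.pair 5 (Nat.pair φ.enc ψ.enc)
  | exFO x φ => Nat.pair 6 (Nat.pair x φ.enc)
  | exSO X φ => Nat.pair 7 (Nat.pair X φ.enc)

end S1SE

/-! ### Labeled trees -/

/-- An `AP`-labeled tree: an infinite partially ordered set of nodes (given by
the strict ancestor relation `lt`) with a least element `root`, in which the
ancestors of every node are totally ordered and finitely many (so that levels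
are defined), and every node has a direct successor. -/
structure LTree (AP : Type) : Type 1 where
  node : Type
  lt : node → node → Prop
  lt_irrefl : ∀ s, ¬ lt s s
  lt_trans : ∀ a b c, lt a b → lt b c → lt a c
  root : node
  root_min : ∀ s, s = root ∨ lt root s
  anc_total : ∀ s a b, lt a s → lt b s → a = b ∨ lt a b ∨ lt b a
  anc_finite : ∀ s, {a | lt a s}.Finite
  succ_exists : ∀ s, ∃ s', lt s s' ∧ ¬ ∃ c, lt s c ∧ lt c s'
  label : node → Set AP

namespace LTree

variable {AP : Type} (T : LTree AP)

/-- `a` is the direct ancestor of `b` -/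
def DirAnc (a b : T.node) : Prop := T.lt a b ∧ ¬ ∃ c, T.lt a c ∧ T.lt c b

/-- a path: an infinite sequence of nodes, each the direct ancestor of the next -/
def IsPath (p : ℕ → T.node) : Prop := ∀ i, T.DirAnc (p i) (p (i + 1))

/-- an initial path: a path starting at the root -/
def InitPath (p : ℕ → T.node) : Prop := T.IsPath p ∧ p 0 = T.root

/-- the level of a node: its number of ancestors -/
noncomputable def level (s : T.node) : ℕ := (T.anc_finite s).toFinset.card

/-- the collection of node sets that constitute exactly one initial infinite
path of the tree -/
def pathSets : Set (Set T.node) :=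
  { A | ∃ p : ℕ → T.node, T.InitPath p ∧ A = Set.range p }

end LTree

/-- Bisimilarity of `AP`-labeled trees. -/
def Bisimilar {AP : Type} (T₁ T₂ : LTree AP) : Prop :=
  ∃ R : T₁.node → T₂.node → Prop,
    R T₁.root T₂.root ∧
    ∀ s u, R s u →
      T₁.label s = T₂.label u ∧
      (∀ s', T₁.DirAnc s s' → ∃ u', T₂.DirAnc u u' ∧ R s' u') ∧
      (∀ u', T₂.DirAnc u u' → ∃ s', T₁.DirAnc s s' ∧ R s' u')

/-! ### HyperCTL* -/

inductive HCTL (AP : Type) : Type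
  | atom : AP → ℕ → HCTL AP           -- a_π
  | not  : HCTL AP → HCTL AP
  | or   : HCTL AP → HCTL AP → HCTL AP
  | next : HCTL AP → HCTL AP
  | untl : HCTL AP → HCTL AP → HCTL AP
  | ex   : ℕ → HCTL AP → HCTL AP      -- ∃π

namespace HCTL

variable {AP : Type}

/-- HyperCTL* satisfaction `Π,i ⊨_T φ`: `V` assigns initial paths to path
variables, `ε` is the most recently assigned path. -/
def sat (T : LTree AP) : (ℕ → ℕ → T.node) → (ℕ → T.node) → ℕ → HCTL AP → Prop
  | V, ε, i, atom a π => a ∈ T.label (V π i)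
  | V, ε, i, not φ => ¬ sat T V ε i φ
  | V, ε, i, or φ ψ => sat T V ε i φ ∨ sat T V ε i ψ
  | V, ε, i, next φ => sat T V ε (i + 1) φ
  | V, ε, i, untl φ ψ =>
      ∃ j, i ≤ j ∧ sat T V ε j ψ ∧ ∀ k, i ≤ k → k < j → sat T V ε k φ
  | V, ε, i, ex π φ =>
      ∃ p : ℕ → T.node, T.InitPath p ∧ (∀ j ≤ i, p j = ε j) ∧
        sat T (Function.update V π p) p i φ

/-- `T ⊨ φ` -/
def models (T : LTree AP) (φ : HCTL AP) : Prop :=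
  ∀ p : ℕ → T.node, T.InitPath p → sat T (fun _ => p) p 0 φ

def satisfiable (φ : HCTL AP) : Prop := ∃ T : LTree AP, models T φ

def qfree : HCTL AP → Prop
  | atom _ _ => True
  | not φ => qfree φ
  | or φ ψ => qfree φ ∧ qfree ψ
  | next φ => qfree φ
  | untl φ ψ => qfree φ ∧ qfree ψ
  | ex _ _ => False

/-- a natural injective encoding of HyperCTL* formulas over `Fin k` -/
def enc {k : ℕ} : HCTL (Fin k) → ℕ
  | atom a π => Nat.pair 0 (Nat.pair a.val π)
  | not φ => Nat.pair 1 φ.enc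
  | or φ ψ => Nat.pair 2 (Nat.pair φ.enc ψ.enc)
  | next φ => Nat.pair 3 φ.enc
  | untl φ ψ => Nat.pair 4 (Nat.pair φ.enc ψ.enc)
  | ex π φ => Nat.pair 5 (Nat.pair π φ.enc)

end HCTL

/-! ### HyperCTL* in negation normal form -/

inductive NHCTL (AP : Type) : Type
  | pos  : AP → ℕ → NHCTL AP           -- a_π
  | neg  : AP → ℕ → NHCTL AP           -- ¬a_π
  | and  : NHCTL AP → NHCTL AP → NHCTL AP
  | or   : NHCTL AP → NHCTL AP → NHCTL AP
  | next : NHCTL AP → NHCTL AP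
  | untl : NHCTL AP → NHCTL AP → NHCTL AP
  | rel  : NHCTL AP → NHCTL AP → NHCTL AP   -- release
  | ex   : ℕ → NHCTL AP → NHCTL AP
  | all  : ℕ → NHCTL AP → NHCTL AP

namespace NHCTL

variable {AP : Type}

def sat (T : LTree AP) : (ℕ → ℕ → T.node) → (ℕ → T.node) → ℕ → NHCTL AP → Prop
  | V, ε, i, pos a π => a ∈ T.label (V π i)
  | V, ε, i, neg a π => a ∉ T.label (V π i)
  | V, ε, i, and φ ψ => sat T V ε i φ ∧ sat T V ε i ψ
  | V, ε, i, or φ ψ => sat T V ε i φ ∨ sat T V ε i ψ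
  | V, ε, i, next φ => sat T V ε (i + 1) φ
  | V, ε, i, untl φ ψ =>
      ∃ j, i ≤ j ∧ sat T V ε j ψ ∧ ∀ k, i ≤ k → k < j → sat T V ε k φ
  | V, ε, i, rel φ ψ =>
      (∀ j, i ≤ j → sat T V ε j ψ) ∨
      ∃ j, i ≤ j ∧ sat T V ε j φ ∧ ∀ k, i ≤ k → k ≤ j → sat T V ε k ψ
  | V, ε, i, ex π φ =>
      ∃ p : ℕ → T.node, T.InitPath p ∧ (∀ j ≤ i, p j = ε j) ∧
        sat T (Function.update V π p) p i φ
  | V, ε, i, all π φ =>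
      ∀ p : ℕ → T.node, T.InitPath p → (∀ j ≤ i, p j = ε j) →
        sat T (Function.update V π p) p i φ

def models (T : LTree AP) (φ : NHCTL AP) : Prop :=
  ∀ p : ℕ → T.node, T.InitPath p → sat T (fun _ => p) p 0 φ

def satisfiable (φ : NHCTL AP) : Prop := ∃ T : LTree AP, models T φ

/-- contains no existential path quantifier -/
def noEx : NHCTL AP → Prop
  | pos _ _ => True
  | neg _ _ => True
  | and φ ψ => noEx φ ∧ noEx ψ
  | or φ ψ => noEx φ ∧ noEx ψ
  | next φ => noEx φ
  | untl φ ψ => noEx φ ∧ noEx ψ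
  | rel φ ψ => noEx φ ∧ noEx ψ
  | ex _ _ => False
  | all _ φ => noEx φ

/-- contains no universal path quantifier -/
def noAll : NHCTL AP → Prop
  | pos _ _ => True
  | neg _ _ => True
  | and φ ψ => noAll φ ∧ noAll ψ
  | or φ ψ => noAll φ ∧ noAll ψ
  | next φ => noAll φ
  | untl φ ψ => noAll φ ∧ noAll ψ
  | rel φ ψ => noAll φ ∧ noAll ψ
  | ex _ φ => noAll φ
  | all _ _ => False

/-- quantifier-free -/
def qf : NHCTL AP → Prop
  | pos _ _ => True
  | neg _ _ => True
  | and φ ψ => qf φ ∧ qf ψ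
  | or φ ψ => qf φ ∧ qf ψ
  | next φ => qf φ
  | untl φ ψ => qf φ ∧ qf ψ
  | rel φ ψ => qf φ ∧ qf ψ
  | ex _ _ => False
  | all _ _ => False

/-- the ∃*∀* fragment: no existential path quantifier occurs in the scope of a
universal path quantifier -/
def eaFrag : NHCTL AP → Prop
  | pos _ _ => True
  | neg _ _ => True
  | and φ ψ => eaFrag φ ∧ eaFrag ψ
  | or φ ψ => eaFrag φ ∧ eaFrag ψ
  | next φ => eaFrag φ
  | untl φ ψ => eaFrag φ ∧ eaFrag ψ
  | rel φ ψ => eaFrag φ ∧ eaFrag ψ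
  | ex _ φ => eaFrag φ
  | all _ φ => noEx φ

/-- a natural injective encoding of NNF HyperCTL* formulas over `Fin k` -/
def enc {k : ℕ} : NHCTL (Fin k) → ℕ
  | pos a π => Nat.pair 0 (Nat.pair a.val π)
  | neg a π => Nat.pair 1 (Nat.pair a.val π)
  | and φ ψ => Nat.pair 2 (Nat.pair φ.enc ψ.enc)
  | or φ ψ => Nat.pair 3 (Nat.pair φ.enc ψ.enc)
  | next φ => Nat.pair 4 φ.enc
  | untl φ ψ => Nat.pair 5 (Nat.pair φ.enc ψ.enc)
  | rel φ ψ => Nat.pair 6 (Nat.pair φ.enc ψ.enc)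
  | ex π φ => Nat.pair 7 (Nat.pair π φ.enc)
  | all π φ => Nat.pair 8 (Nat.pair π φ.enc)

end NHCTL

/-! ### MSO[E] and MPL[E] over labeled trees -/

inductive MSOE (AP : Type) : Type
  | patom : AP → ℕ → MSOE AP           -- P_a(x)
  | lt    : ℕ → ℕ → MSOE AP            -- x < y  (proper ancestor)
  | eq    : ℕ → ℕ → MSOE AP            -- x = y
  | el    : ℕ → ℕ → MSOE AP            -- E(x,y)
  | mem   : ℕ → ℕ → MSOE AP            -- x ∈ X
  | not   : MSOE AP → MSOE AP
  | or    : MSOE AP → MSOE AP → MSOE AP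
  | exFO  : ℕ → MSOE AP → MSOE AP      -- ∃x
  | exSO  : ℕ → MSOE AP → MSOE AP      -- ∃X

namespace MSOE

variable {AP : Type}

/-- satisfaction over a labeled tree, where second-order quantifiers range over
the collection `SO` of admissible node sets -/
def sat (T : LTree AP) (SO : Set (Set T.node)) :
    (ℕ → T.node) → (ℕ → Set T.node) → MSOE AP → Prop
  | v1, v2, patom a x => a ∈ T.label (v1 x)
  | v1, v2, lt x y => T.lt (v1 x) (v1 y)
  | v1, v2, eq x y => v1 x = v1 y
  | v1, v2, el x y => T.level (v1 x) = T.level (v1 y)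
  | v1, v2, mem x X => v1 x ∈ v2 X
  | v1, v2, not φ => ¬ sat T SO v1 v2 φ
  | v1, v2, or φ ψ => sat T SO v1 v2 φ ∨ sat T SO v1 v2 ψ
  | v1, v2, exFO x φ => ∃ s : T.node, sat T SO (Function.update v1 x s) v2 φ
  | v1, v2, exSO X φ => ∃ A ∈ SO, sat T SO v1 (Function.update v2 X A) φ

def freeFO : MSOE AP → Finset ℕ
  | patom _ x => {x}
  | lt x y => {x, y}
  | eq x y => {x, y}
  | el x y => {x, y}
  | mem x _ => {x}
  | not φ => freeFO φ
  | or φ ψ => freeFO φ ∪ freeFO ψ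
  | exFO x φ => (freeFO φ).erase x
  | exSO _ φ => freeFO φ

def freeSO : MSOE AP → Finset ℕ
  | patom _ _ => ∅
  | lt _ _ => ∅
  | eq _ _ => ∅
  | el _ _ => ∅
  | mem _ X => {X}
  | not φ => freeSO φ
  | or φ ψ => freeSO φ ∪ freeSO ψ
  | exFO _ φ => freeSO φ
  | exSO X φ => (freeSO φ).erase X

def closed (φ : MSOE AP) : Prop := φ.freeFO = ∅ ∧ φ.freeSO = ∅

/-- `T ⊨ φ` with MPL[E] semantics: second-order quantification restricted to
sets of nodes constituting exactly one initial infinite path -/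
def modelsMPL (T : LTree AP) (φ : MSOE AP) : Prop :=
  sat T T.pathSets (fun _ => T.root) (fun _ => (∅ : Set T.node)) φ

/-- `T ⊨ φ` with full MSO[E] semantics: second-order quantification over
arbitrary sets of nodes -/
def modelsMSO (T : LTree AP) (φ : MSOE AP) : Prop :=
  sat T Set.univ (fun _ => T.root) (fun _ => (∅ : Set T.node)) φ

end MSOE

/-! ### HyperQCTL* -/

inductive HQCTL (AP : Type) : Type
  | atom  : AP → ℕ → HQCTL AP          -- a_π
  | qatom : ℕ → ℕ → HQCTL AP           -- q_π
  | not   : HQCTL AP → HQCTL AP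
  | or    : HQCTL AP → HQCTL AP → HQCTL AP
  | next  : HQCTL AP → HQCTL AP
  | untl  : HQCTL AP → HQCTL AP → HQCTL AP
  | ex    : ℕ → HQCTL AP → HQCTL AP    -- ∃π
  | exPr  : ℕ → HQCTL AP → HQCTL AP    -- ∃q

namespace HQCTL

variable {AP : Type}

/-- HyperQCTL* satisfaction: `Q` records, for every quantified proposition, the
set of tree nodes currently labeled by it (a relabeling of the tree). -/
def sat (T : LTree AP) : (ℕ → Set T.node) → (ℕ → ℕ → T.node) → (ℕ → T.node) →
    ℕ → HQCTL AP → Prop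
  | Q, V, ε, i, atom a π => a ∈ T.label (V π i)
  | Q, V, ε, i, qatom q π => V π i ∈ Q q
  | Q, V, ε, i, not φ => ¬ sat T Q V ε i φ
  | Q, V, ε, i, or φ ψ => sat T Q V ε i φ ∨ sat T Q V ε i ψ
  | Q, V, ε, i, next φ => sat T Q V ε (i + 1) φ
  | Q, V, ε, i, untl φ ψ =>
      ∃ j, i ≤ j ∧ sat T Q V ε j ψ ∧ ∀ k, i ≤ k → k < j → sat T Q V ε k φ
  | Q, V, ε, i, ex π φ =>
      ∃ p : ℕ → T.node, T.InitPath p ∧ (∀ j ≤ i, p j = ε j) ∧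
        sat T Q (Function.update V π p) p i φ
  | Q, V, ε, i, exPr q φ =>
      ∃ A : Set T.node, sat T (Function.update Q q A) V ε i φ

def models (T : LTree AP) (φ : HQCTL AP) : Prop :=
  ∀ p : ℕ → T.node, T.InitPath p →
    sat T (fun _ => (∅ : Set T.node)) (fun _ => p) p 0 φ

end HQCTL

set_option maxHeartbeats 1000000

namespace S6

set_option maxHeartbeats 1000000 in
example : True := trivial

local instance : Fact (Nat.Prime 3) := ⟨by norm_num⟩


local instance : Fact (Nat.Prime 3) := ⟨by norm_num⟩

/-- 3-adic valuation -/
def v3 (z : ℕ) : ℕ := padicValNat 3 z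

lemma v3_zero : v3 0 = 0 := by simp [v3]

lemma v3_char {z k : ℕ} (hz : z ≠ 0) (h1 : 3^k ∣ z) (h2 : ¬ 3^(k+1) ∣ z) : v3 z = k := by
  have hk : k ≤ padicValNat 3 z := (padicValNat_dvd_iff_le hz).mp h1
  have hk2 : ¬ (k+1) ≤ padicValNat 3 z := fun h => h2 ((padicValNat_dvd_iff_le hz).mpr h)
  unfold v3; omega

lemma v3_pow_dvd (z : ℕ) : 3^(v3 z) ∣ z := pow_padicValNat_dvd

lemma v3_not_dvd {z : ℕ} (hz : z ≠ 0) : ¬ 3^(v3 z + 1) ∣ z :=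
  pow_succ_padicValNat_not_dvd hz

lemma v3_le {z : ℕ} (hz : z ≠ 0) : 3^(v3 z) ≤ z :=
  Nat.le_of_dvd (Nat.pos_of_ne_zero hz) (v3_pow_dvd z)

lemma v3_lt_of_lt_pow {z E : ℕ} (hz : z ≠ 0) (h : z < 3^E) : v3 z < E := by
  by_contra h'
  push_neg at h'
  exact absurd (lt_of_le_of_lt (le_trans (Nat.pow_le_pow_right (by norm_num) h') (v3_le hz)) h) (lt_irrefl _)

/-- valuation of m + u where 3^E ∣ m and v3 u < E -/
lemma v3_add {m u E : ℕ} (hu : u ≠ 0) (hE : v3 u < E) (hm : 3^E ∣ m) :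
    v3 (m + u) = v3 u := by
  apply v3_char (by positivity)
  · exact Nat.dvd_add (dvd_trans (Nat.pow_dvd_pow 3 (le_of_lt hE)) hm) (v3_pow_dvd u)
  · intro hdvd
    have hm' : 3^(v3 u + 1) ∣ m := dvd_trans (Nat.pow_dvd_pow 3 hE) hm
    exact v3_not_dvd hu ((Nat.dvd_add_right hm').mp hdvd)

/-- valuation of m - u where 3^E ∣ m, 0 < u < m, v3 u < E -/
lemma v3_sub {m u E : ℕ} (hu : u ≠ 0) (hum : u < m) (hE : v3 u < E) (hm : 3^E ∣ m) :
    v3 (m - u) = v3 u := by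
  apply v3_char (by omega)
  · have h1 : 3^(v3 u) ∣ m := dvd_trans (Nat.pow_dvd_pow 3 (le_of_lt hE)) hm
    exact Nat.dvd_sub h1 (v3_pow_dvd u)
  · intro hdvd
    have hm' : 3^(v3 u + 1) ∣ m := dvd_trans (Nat.pow_dvd_pow 3 hE) hm
    have : 3^(v3 u + 1) ∣ m - (m - u) := Nat.dvd_sub hm' hdvd
    rw [Nat.sub_sub_self (le_of_lt hum)] at this
    exact v3_not_dvd hu this

/-- congruence mod 3^E preserves small valuations -/
lemma v3_congr {a b E : ℕ} (ha : a ≠ 0) (hb : b ≠ 0) (hE : v3 a < E)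
    (hab : a % 3^E = b % 3^E) : v3 b = v3 a := by
  have hmod : Nat.ModEq (3^E) a b := hab
  apply v3_char hb
  · exact (Nat.ModEq.dvd_iff hmod (Nat.pow_dvd_pow 3 (le_of_lt hE))).mp (v3_pow_dvd a)
  · intro hdvd
    exact v3_not_dvd ha ((Nat.ModEq.dvd_iff hmod (Nat.pow_dvd_pow 3 hE)).mpr hdvd)

/-- v3 of an exact multiple -/
lemma v3_exact {V m : ℕ} (hm : ¬ 3 ∣ m) (hm0 : m ≠ 0) : v3 (3^V * m) = V := by
  apply v3_char (by positivity)
  · exact Dvd.intro m rfl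
  · intro h
    rcases h with ⟨c, hc⟩
    rw [pow_succ, mul_assoc] at hc
    have := Nat.eq_of_mul_eq_mul_left (show 0 < 3^V by positivity) hc
    exact hm ⟨c, this⟩

/-- uniqueness of high-valuation points in short windows -/
lemma v3_unique_high {x y E : ℕ} (hx : x ≠ 0) (hxy : x < y) (h : y < x + 3^E)
    (hvx : E ≤ v3 x) (hvy : E ≤ v3 y) : False := by
  have h1 : 3^E ∣ x := dvd_trans (Nat.pow_dvd_pow 3 hvx) (v3_pow_dvd x)
  have h2 : 3^E ∣ y := dvd_trans (Nat.pow_dvd_pow 3 hvy) (v3_pow_dvd y)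
  have h3 : 3^E ∣ y - x := Nat.dvd_sub h2 h1
  have h4 : y - x ≠ 0 := by omega
  have := Nat.le_of_dvd (by omega) h3
  omega

/-- density of exact-valuation points: in any interval [lo, lo + 2*3^V] with lo ≥ 1
there is z with v3 z = V -/
lemma exists_exact_val (V lo : ℕ) (hlo : 1 ≤ lo) :
    ∃ z, lo ≤ z ∧ z ≤ lo + 2 * 3^V ∧ v3 z = V := by
  set m := (lo + 3^V - 1) / 3^V * 3^V with hm
  have h3V : 0 < 3^V := by positivity
  have hm1 : lo ≤ m := by
    rw [hm]
    have := Nat.div_mul_le_self (lo + 3^V - 1) (3^V)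
    have h2 := Nat.lt_div_mul_add (a := lo + 3^V - 1) h3V
    -- m = ((lo + 3^V - 1)/3^V)*3^V and lo + 3^V - 1 < m + 3^V
    omega
  have hm2 : m ≤ lo + 3^V := by
    rw [hm]
    have := Nat.div_mul_le_self (lo + 3^V - 1) (3^V)
    omega
  have hmd : 3^V ∣ m := Dvd.dvd.mul_left (dvd_refl _) _
  rcases hmd with ⟨c, hc⟩
  by_cases h3 : 3 ∣ c
  · refine ⟨m + 3^V, by omega, by omega, ?_⟩
    have : m + 3^V = 3^V * (c+1) := by rw [hc]; ring
    rw [this]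
    exact v3_exact (by omega) (by omega)
  · refine ⟨m, by omega, by omega, ?_⟩
    rw [hc]
    have hc0 : c ≠ 0 := by rintro rfl; simp at hc; omega
    exact v3_exact h3 hc0

/-- find x ≡ y (mod m) in [lo, lo+m) -/
lemma exists_congr_in (lo m y : ℕ) (hm : 0 < m) :
    ∃ x, lo ≤ x ∧ x < lo + m ∧ x % m = y % m := by
  refine ⟨lo + (y + m - lo % m) % m, by omega, by have := Nat.mod_lt (y + m - lo % m) hm; omega, ?_⟩
  have h2 : lo % m < m := Nat.mod_lt _ hm
  have h3 : lo % m ≤ lo := Nat.mod_le _ _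
  have e1 : Nat.ModEq m (lo + (y + m - lo % m) % m) (lo + (y + m - lo % m)) :=
    Nat.ModEq.add_left _ (Nat.mod_modEq _ _)
  have e2 : Nat.ModEq m (lo + (y + m - lo % m)) (lo % m + (y + m - lo % m)) :=
    Nat.ModEq.add_right _ (Nat.mod_modEq lo m).symm
  have e3 : lo % m + (y + m - lo % m) = y + m := by omega
  have e4 : Nat.ModEq m (y + m) y := by
    simpa using (Nat.add_modEq_right (n := m) (a := y))
  have := (e1.trans e2)
  rw [e3] at this
  exact this.trans e4


section Words
variable {P : ℕ}

/-- the "no" word: at position z ≥ 1, branch c has label a iff c is not the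
(cycling) coordinate of the 3-adic level of z -/
def noA (P : ℕ) (z : ℕ) (c : Fin P) : Bool := if z = 0 then false else decide (v3 z % P ≠ c.val)

/-- the "yes" word: same, except all branches have a at position g -/
def yesA (P : ℕ) (g z : ℕ) (c : Fin P) : Bool := if z = g then true else noA P z c

lemma pow3_le {a b : ℕ} (h : a ≤ b) : (3:ℕ)^a ≤ 3^b := Nat.pow_le_pow_right (by norm_num) h
lemma pow3_pos (a : ℕ) : 0 < (3:ℕ)^a := by positivity
lemma pow3_step (a : ℕ) : (3:ℕ)^(a+1) = 3^a * 3 := pow_succ 3 a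

lemma noA_congr {z z' : ℕ} (hz : z ≠ 0) (hz' : z' ≠ 0) (h : v3 z % P = v3 z' % P) :
    ∀ c : Fin P, noA P z c = noA P z' c := by
  intro c; simp only [noA, if_neg hz, if_neg hz', h]

lemma yes_eq_no {g z : ℕ} (h : z ≠ g) : ∀ c : Fin P, yesA P g z c = noA P z c := by
  intro c; simp only [yesA, if_neg h]

/-- a level congruent to f above a given base -/
def levelFor (P : ℕ) (base f : ℕ) : ℕ := base + (f + P - base % P) % P

lemma levelFor_spec (hP : 0 < P) (base f : ℕ) (hf : f < P) :
    levelFor P base f % P = f ∧ base ≤ levelFor P base f ∧ levelFor P base f < base + P := by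
  refine ⟨?_, Nat.le_add_right _ _, by have := Nat.mod_lt (f + P - base % P) hP; unfold levelFor; omega⟩
  unfold levelFor
  have h2 : base % P < P := Nat.mod_lt _ hP
  have h3 : base % P ≤ base := Nat.mod_le _ _
  have e1 : Nat.ModEq P (base + (f + P - base % P) % P) (base + (f + P - base % P)) :=
    Nat.ModEq.add_left _ (Nat.mod_modEq _ _)
  have e2 : Nat.ModEq P (base + (f + P - base % P)) (base % P + (f + P - base % P)) :=
    Nat.ModEq.add_right _ (Nat.mod_modEq base P).symm
  have e3 : base % P + (f + P - base % P) = f + P := by omega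
  have e4 : Nat.ModEq P (f + P) f := by simpa using (Nat.add_modEq_right (n := P) (a := f))
  have := (e1.trans e2); rw [e3] at this
  have := this.trans e4
  simpa [Nat.ModEq, Nat.mod_eq_of_lt hf] using this

/-- window recurrence for the no-word: any window pattern of length 3^E recurs
in every interval of length 3^(E+P+2) -/
lemma window_rec (hP : 0 < P) (E y lo : ℕ) (hy : 1 ≤ y) (hlo : 1 ≤ lo) :
    ∃ y', lo ≤ y' ∧ y' ≤ lo + 3^(E+P+2) ∧
      ∀ t < 3^E, ∀ c : Fin P, noA P (y'+t) c = noA P (y+t) c := by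
  by_cases h : ∃ t, t < 3^E ∧ E ≤ v3 (y+t)
  · obtain ⟨t₀, ht₀, hv⟩ := h
    set V := v3 (y + t₀) with hV
    set K := levelFor P E (V % P) with hK
    obtain ⟨hKmod, hKge, hKlt⟩ := levelFor_spec hP E (V % P) (Nat.mod_lt _ hP)
    obtain ⟨z, hz1, hz2, hz3⟩ := exists_exact_val K (lo + t₀) (by omega)
    refine ⟨z - t₀, by omega, ?_, ?_⟩
    · have hpow : 2 * 3^K ≤ 3^(E+P+1) := by
        have : 3^K ≤ 3^(E+P) := Nat.pow_le_pow_right (by norm_num) (by omega)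
        have : 3^(E+P)*3 ≤ 3^(E+P+1) := by rw [pow_succ]
        omega
      have : 3^(E+P+1) ≤ 3^(E+P+2) := Nat.pow_le_pow_right (by norm_num) (by omega)
      omega
    · intro t ht c
      have hzK : 3^K ∣ z := by rw [← hz3]; exact v3_pow_dvd z
      have hyE : 3^E ∣ (y + t₀) := dvd_trans (Nat.pow_dvd_pow 3 hv) (v3_pow_dvd _)
      have hzE : 3^E ∣ z := dvd_trans (Nat.pow_dvd_pow 3 (by omega : E ≤ K)) hzK
      have hz0 : z ≠ 0 := by
        intro h0; rw [h0] at hz1; omega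
      have hzbig : 3^K ≤ z := by
        rw [← hz3]; exact v3_le hz0
      have hEK : 3^E ≤ 3^K := Nat.pow_le_pow_right (by norm_num) (by omega)
      rcases Nat.lt_trichotomy t t₀ with hlt | heq | hgt
      · -- t < t₀ : subtract r := t₀ - t
        set r := t₀ - t with hr
        have hr0 : r ≠ 0 := by omega
        have hvr : v3 r < E := v3_lt_of_lt_pow hr0 (by omega)
        have e1 : y + t = (y + t₀) - r := by omega
        have e2 : z - t₀ + t = z - r := by omega
        have hv1 : v3 (y+t) = v3 r := by
          rw [e1]; exact v3_sub hr0 (by omega) hvr hyE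
        have hv2 : v3 (z - t₀ + t) = v3 r := by
          rw [e2]; exact v3_sub hr0 (by omega) hvr hzE
        exact noA_congr (by omega) (by omega) (by rw [hv1, hv2]) c
      · subst heq
        have e2 : z - t + t = z := by omega
        rw [e2]
        have hv2 : v3 (y + t) % P = v3 z % P := by rw [hz3, hKmod]
        exact (noA_congr (by omega) hz0 hv2 c).symm
      · -- t > t₀ : add r := t - t₀
        set r := t - t₀ with hr
        have hr0 : r ≠ 0 := by omega
        have hvr : v3 r < E := v3_lt_of_lt_pow hr0 (by omega)
        have e1 : y + t = (y + t₀) + r := by omega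
        have e2 : z - t₀ + t = z + r := by omega
        have hv1 : v3 (y+t) = v3 r := by rw [e1]; exact v3_add hr0 hvr hyE
        have hv2 : v3 (z - t₀ + t) = v3 r := by rw [e2]; exact v3_add hr0 hvr hzE
        exact noA_congr (by omega) (by omega) (by rw [hv1, hv2]) c
  · push_neg at h
    obtain ⟨x, hx1, hx2, hx3⟩ := exists_congr_in lo (3^E) y (by positivity)
    refine ⟨x, hx1, by have : (3:ℕ)^E ≤ 3^(E+P+2) := Nat.pow_le_pow_right (by norm_num) (by omega); omega, ?_⟩
    intro t ht c
    have hmod : (x + t) % 3^E = (y + t) % 3^E := by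
      have : Nat.ModEq (3^E) x y := hx3
      exact (this.add_right t)
    have hvy : v3 (y+t) < E := h t ht
    have := v3_congr (a := y+t) (b := x+t) (by omega) (by omega) hvy (by omega)
    exact noA_congr (by omega) (by omega) (by rw [this]) c

/-- window recurrence avoiding a forbidden position -/
lemma window_rec' (hP : 0 < P) (E y lo b : ℕ) (hy : 1 ≤ y) (hlo : 1 ≤ lo) :
    ∃ y', lo ≤ y' ∧ y' ≤ lo + 3^(E+P+4) ∧
      (∀ t < 3^E, ∀ c : Fin P, noA P (y'+t) c = noA P (y+t) c) ∧
      (∀ t < 3^E, y' + t ≠ b) := by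
  obtain ⟨y₁, h11, h12, h13⟩ := window_rec hP E y lo hy hlo
  obtain ⟨y₂, h21, h22, h23⟩ := window_rec hP E y (lo + 3^(E+P+2) + 3^E + 1) hy
    (Nat.le_add_left 1 _)
  have hb : (∀ t < 3^E, y₁ + t ≠ b) ∨ (∀ t < 3^E, y₂ + t ≠ b) := by
    by_contra hcon
    push_neg at hcon
    obtain ⟨⟨t₁, ht₁, he₁⟩, ⟨t₂, ht₂, he₂⟩⟩ := hcon
    omega
  have hx1 : (1:ℕ) ≤ 3^(E+P+2) := Nat.one_le_pow _ _ (by norm_num)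
  have hE0 : (1:ℕ) ≤ 3^E := Nat.one_le_pow _ _ (by norm_num)
  have ha : (3:ℕ)^E ≤ 3^(E+P+2) := pow3_le (by omega)
  have hb4 : (3:ℕ)^(E+P+4) = 3^(E+P+2) * 3 * 3 := by
    rw [show E+P+4 = (E+P+2)+1+1 by omega, pow3_step, pow3_step]
  have hpow : 3^(E+P+2) + 3^(E+P+2) + 3^E + 1 ≤ 3^(E+P+4) := by omega
  rcases hb with hb | hb
  · exact ⟨y₁, h11, by omega, h13, hb⟩
  · exact ⟨y₂, by omega, by omega, h23, hb⟩

end Words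

section EF
variable (P C T : ℕ)

/-- the EF relation between positions in the yes-word and the no-word -/
def REL (R : Finset (Fin P)) (e i j : ℕ) : Prop :=
  (i = 0 ↔ j = 0) ∧ ∀ t < 3^(C*e+C), ∀ c ∈ R, yesA P (3^T) (i+t) c = noA P (j+t) c

lemma REL_zero (R : Finset (Fin P)) (e : ℕ) (hT : C*e+C ≤ T) : REL P C T R e 0 0 := by
  refine ⟨Iff.rfl, fun t ht c _ => ?_⟩
  have h1 : t < 3^T := lt_of_lt_of_le ht (pow3_le hT)
  simpa using yes_eq_no (P := P) (g := 3^T) (z := 0 + t) (by omega) c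

lemma REL_next (hC : 0 < C) (R : Finset (Fin P)) (e i j : ℕ) (h : REL P C T R (e+1) i j) :
    REL P C T R e (i+1) (j+1) := by
  refine ⟨by omega, fun t ht c hc => ?_⟩
  have h2 : 1 + t < 3^(C*(e+1)+C) := by
    have e1 : C*(e+1)+C = (C*e+C)+C := by ring
    have e2 : (3:ℕ)^(C*e+C) * 3 ≤ 3^((C*e+C)+C) := by
      calc (3:ℕ)^(C*e+C) * 3 = 3^((C*e+C)+1) := (pow3_step _).symm
      _ ≤ _ := pow3_le (by omega)
    have := pow3_pos (C*e+C)
    rw [e1]; omega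
  have := h.2 (1+t) h2 c hc
  have e3 : i + (1+t) = i+1+t := by omega
  have e4 : j + (1+t) = j+1+t := by omega
  rwa [e3, e4] at this

/-- camouflage: the window of the yes-word covering the defect position 3^T
matches the window of the no-word around an exact-valuation point z -/
lemma camo_window (hP : 0 < P) (R : Finset (Fin P)) (f : Fin P) (hf : f ∉ R)
    {E K z u₀ : ℕ} (hz : v3 z = K) (hK1 : E+1 ≤ K) (hKP : K % P = f.val)
    (hu : u₀ < 3^E) (hET : E ≤ T) :
    ∀ t < 3^E, ∀ c ∈ R, yesA P (3^T) (3^T - u₀ + t) c = noA P (z - u₀ + t) c := by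
  intro t ht c hc
  have hz0 : z ≠ 0 := by
    intro h0; rw [h0, v3_zero] at hz; omega
  have hzK : 3^K ∣ z := by rw [← hz]; exact v3_pow_dvd z
  have hzbig : 3^K ≤ z := by rw [← hz]; exact v3_le hz0
  have hEK : (3:ℕ)^(E+1) ≤ 3^K := pow3_le hK1
  have hE1 : (3:ℕ)^(E+1) = 3^E * 3 := pow3_step E
  have hgE : (3:ℕ)^E ≤ 3^T := pow3_le hET
  have hgpos := pow3_pos T
  have hEpos := pow3_pos E
  rcases Nat.lt_trichotomy t u₀ with hlt | heq | hgt
  · -- subtract r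
    set r := u₀ - t with hr
    have hr0 : r ≠ 0 := by omega
    have hvr : v3 r < E := v3_lt_of_lt_pow hr0 (by omega)
    have e1 : 3^T - u₀ + t = 3^T - r := by omega
    have e2 : z - u₀ + t = z - r := by omega
    rw [e1, e2]
    have hv1 : v3 (3^T - r) = v3 r := v3_sub hr0 (by omega) (by omega) (dvd_refl _)
    have hv2 : v3 (z - r) = v3 r := v3_sub hr0 (by omega) (by omega) hzK
    have hne : 3^T - r ≠ 3^T := by omega
    rw [yes_eq_no hne]
    exact noA_congr (by omega) (by omega) (by rw [hv1, hv2]) c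
  · subst heq
    have e1 : 3^T - t + t = 3^T := by omega
    have e2 : z - t + t = z := by omega
    rw [e1, e2]
    have h1 : yesA P (3^T) (3^T) c = true := by simp [yesA]
    have h2 : noA P z c = true := by
      simp only [noA, if_neg hz0, hz, hKP, decide_eq_true_eq]
      intro hcc
      exact hf (by rwa [show c = f from Fin.ext hcc.symm] at hc)
    rw [h1, h2]
  · -- add r
    set r := t - u₀ with hr
    have hr0 : r ≠ 0 := by omega
    have hvr : v3 r < E := v3_lt_of_lt_pow hr0 (by omega)
    have e1 : 3^T - u₀ + t = 3^T + r := by omega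
    have e2 : z - u₀ + t = z + r := by omega
    rw [e1, e2]
    have hv1 : v3 (3^T + r) = v3 r := v3_add hr0 (by omega) (dvd_refl _)
    have hv2 : v3 (z + r) = v3 r := v3_add hr0 (by omega) hzK
    have hne : 3^T + r ≠ 3^T := by omega
    rw [yes_eq_no hne]
    exact noA_congr (by omega) (by omega) (by rw [hv1, hv2]) c

/-- the middle-matching lemma for long jumps -/
lemma middles (hP : 0 < P) (hC : 2*P+20 ≤ C) (R : Finset (Fin P))
    (e i j i' : ℕ) (hT : C*e+C+C ≤ T) (hrel0 : i = 0 ↔ j = 0)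
    (hbig : 3^(C*e+C+C) - 3^(C*e+C) < i' - i) :
    ∀ k', j ≤ k' → ∃ k, i ≤ k ∧ k < i' ∧ REL P C T R e k k' := by
  intro k' hk'
  have hx1 : (1:ℕ) ≤ 3^(C*e+C) := Nat.one_le_pow _ _ (by norm_num)
  have h9 : (3:ℕ)^((C*e+C)+P+4) * 9 ≤ 3^((C*e+C)+C) := by
    calc (3:ℕ)^((C*e+C)+P+4) * 9 = 3^((C*e+C)+P+4) * 3 * 3 := by ring
    _ = 3^((C*e+C)+P+4+1+1) := by rw [pow3_step ((C*e+C)+P+4+1), pow3_step ((C*e+C)+P+4)]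
    _ ≤ _ := pow3_le (by omega)
  have hyx : (3:ℕ)^(C*e+C) ≤ 3^((C*e+C)+P+4) := pow3_le (by omega)
  have hxpos : (1:ℕ) ≤ 3^((C*e+C)+P+4) := Nat.one_le_pow _ _ (by norm_num)
  by_cases hk0 : k' = 0
  · subst hk0
    have hj0 : j = 0 := by omega
    have hi0 : i = 0 := hrel0.mpr hj0
    refine ⟨0, by omega, by omega, REL_zero P C T R e (by omega)⟩
  · obtain ⟨k, hk1, hk2, hk3, hk4⟩ :=
      window_rec' hP (C*e+C) k' (i+1) (3^T) (by omega) (by omega)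
    refine ⟨k, by omega, by omega, ⟨by omega, fun t ht c hc => ?_⟩⟩
    rw [yes_eq_no (hk4 t ht)]
    exact hk3 t ht c

/-- FORTH: simulate a forward jump of the yes-word in the no-word -/
lemma FORTH (hP : 0 < P) (hC : 2*P+20 ≤ C) (R : Finset (Fin P)) (f : Fin P) (hf : f ∉ R)
    (e i j i' : ℕ) (hT : C*e+C+C ≤ T) (hrel : REL P C T R (e+1) i j) (hii' : i ≤ i') :
    ∃ j', j ≤ j' ∧ REL P C T R e i' j' ∧
      ∀ k', j ≤ k' → k' < j' → ∃ k, i ≤ k ∧ k < i' ∧ REL P C T R e k k' := by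
  obtain ⟨hr0, hrw⟩ := hrel
  have hEC : C*(e+1)+C = C*e+C+C := by ring
  rw [hEC] at hrw
  have hx1 : (1:ℕ) ≤ 3^(C*e+C) := Nat.one_le_pow _ _ (by norm_num)
  have hxC : (1:ℕ) ≤ 3^((C*e+C)+C) := Nat.one_le_pow _ _ (by norm_num)
  have hECle : (3:ℕ)^(C*e+C) * 3 ≤ 3^((C*e+C)+C) := by
    calc (3:ℕ)^(C*e+C) * 3 = 3^((C*e+C)+1) := (pow3_step (C*e+C)).symm
    _ ≤ _ := pow3_le (by omega)
  by_cases hA : i' - i ≤ 3^((C*e+C)+C) - 3^(C*e+C)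
  · -- short jump
    refine ⟨j + (i' - i), by omega, ⟨by omega, fun t ht c hc => ?_⟩, ?_⟩
    · have h2 := hrw ((i'-i)+t) (by omega) c hc
      have e3 : i + ((i'-i)+t) = i'+t := by omega
      have e4 : j + ((i'-i)+t) = j + (i'-i) + t := by omega
      rwa [e3, e4] at h2
    · intro k' h1 h2
      refine ⟨i + (k' - j), by omega, by omega, ⟨by omega, fun t ht c hc => ?_⟩⟩
      have h3 := hrw ((k'-j)+t) (by omega) c hc
      have e3 : i + ((k'-j)+t) = i + (k'-j) + t := by omega
      have e4 : j + ((k'-j)+t) = k'+t := by omega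
      rwa [e3, e4] at h3
  · have hbig : 3^((C*e+C)+C) - 3^(C*e+C) < i' - i := by omega
    have hmid := middles P C T hP hC R e i j i' hT hr0 (by omega)
    by_cases hg : i' ≤ 3^T ∧ 3^T < i' + 3^(C*e+C)
    · -- target window covers the defect: camouflage
      set u₀ := 3^T - i' with hu₀
      have hu : u₀ < 3^(C*e+C) := by omega
      obtain ⟨hKmod, hKge, hKlt⟩ := levelFor_spec hP ((C*e+C)+1) f.val f.isLt
      set K := levelFor P ((C*e+C)+1) f.val with hK
      obtain ⟨z, hz1, hz2, hz3⟩ := exists_exact_val K (max (j + 3^(C*e+C)) (3^T + 1))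
        (le_trans (by omega) (le_max_right _ _))
      have hzj : j + 3^(C*e+C) ≤ z := le_trans (le_max_left _ _) hz1
      have hzg : 3^T + 1 ≤ z := le_trans (le_max_right _ _) hz1
      have hgE : (3:ℕ)^(C*e+C) ≤ 3^T := pow3_le (by omega)
      refine ⟨z - u₀, by omega, ⟨by constructor <;> (intro h; omega), fun t ht c hc => ?_⟩, ?_⟩
      · have e1 : i' + t = 3^T - u₀ + t := by omega
        rw [e1]
        exact camo_window P T hP R f hf hz3 hKge hKmod hu (by omega) t ht c hc
      · intro k' h1 h2
        exact hmid k' h1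
    · -- target window misses the defect
      have havoid : ∀ t < 3^(C*e+C), i' + t ≠ 3^T := by
        intro t ht
        rcases not_and_or.mp hg with h | h
        · push_neg at h; omega
        · push_neg at h; omega
      obtain ⟨j', hj1, hj2, hj3⟩ := window_rec hP (C*e+C) i' (j+1) (by omega) (by omega)
      refine ⟨j', by omega, ⟨by constructor <;> (intro h; omega), fun t ht c hc => ?_⟩, ?_⟩
      · rw [yes_eq_no (havoid t ht)]
        exact (hj3 t ht c).symm
      · intro k' h1 h2
        exact hmid k' h1

/-- BACK: simulate a forward jump of the no-word in the yes-word -/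
lemma BACK (hP : 0 < P) (hC : 2*P+20 ≤ C) (R : Finset (Fin P)) (f : Fin P) (hf : f ∉ R)
    (e i j j' : ℕ) (hT : C*e+C+C ≤ T) (hrel : REL P C T R (e+1) i j) (hjj' : j ≤ j') :
    ∃ i', i ≤ i' ∧ REL P C T R e i' j' ∧
      ∀ k, i ≤ k → k < i' → ∃ k', j ≤ k' ∧ k' < j' ∧ REL P C T R e k k' := by
  obtain ⟨hr0, hrw⟩ := hrel
  have hEC : C*(e+1)+C = C*e+C+C := by ring
  rw [hEC] at hrw
  have hx1 : (1:ℕ) ≤ 3^(C*e+C) := Nat.one_le_pow _ _ (by norm_num)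
  have hxC : (1:ℕ) ≤ 3^((C*e+C)+C) := Nat.one_le_pow _ _ (by norm_num)
  have hECle : (3:ℕ)^(C*e+C) * 3 ≤ 3^((C*e+C)+C) := by
    calc (3:ℕ)^(C*e+C) * 3 = 3^((C*e+C)+1) := (pow3_step (C*e+C)).symm
    _ ≤ _ := pow3_le (by omega)
  have h9 : (3:ℕ)^((C*e+C)+P+4) * 9 ≤ 3^((C*e+C)+C) := by
    calc (3:ℕ)^((C*e+C)+P+4) * 9 = 3^((C*e+C)+P+4) * 3 * 3 := by ring
    _ = 3^((C*e+C)+P+4+1+1) := by rw [pow3_step ((C*e+C)+P+4+1), pow3_step ((C*e+C)+P+4)]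
    _ ≤ _ := pow3_le (by omega)
  have hyx : (3:ℕ)^(C*e+C) ≤ 3^((C*e+C)+P+4) := pow3_le (by omega)
  by_cases hA : j' - j ≤ 3^((C*e+C)+C) - 3^(C*e+C)
  · refine ⟨i + (j' - j), by omega, ⟨by omega, fun t ht c hc => ?_⟩, ?_⟩
    · have h2 := hrw ((j'-j)+t) (by omega) c hc
      have e3 : i + ((j'-j)+t) = i + (j'-j) + t := by omega
      have e4 : j + ((j'-j)+t) = j'+t := by omega
      rwa [e3, e4] at h2
    · intro k h1 h2
      refine ⟨j + (k - i), by omega, by omega, ⟨by omega, fun t ht c hc => ?_⟩⟩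
      have h3 := hrw ((k-i)+t) (by omega) c hc
      have e3 : i + ((k-i)+t) = k+t := by omega
      have e4 : j + ((k-i)+t) = j + (k-i) + t := by omega
      rwa [e3, e4] at h3
  · have hbig : 3^((C*e+C)+C) - 3^(C*e+C) < j' - j := by omega
    -- choose i' as a copy of the j'-window avoiding the defect
    obtain ⟨i', hi1, hi2, hi3, hi4⟩ := window_rec' hP (C*e+C) j' (i+1) (3^T) (by omega) (by omega)
    refine ⟨i', by omega, ⟨by constructor <;> (intro h; omega), fun t ht c hc => ?_⟩, ?_⟩
    · rw [yes_eq_no (hi4 t ht)]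
      exact hi3 t ht c
    · -- back middles
      intro k h1 h2
      by_cases hk0 : k = 0
      · subst hk0
        have hi0 : i = 0 := by omega
        have hj0 : j = 0 := hr0.mp hi0
        exact ⟨0, by omega, by omega, REL_zero P C T R e (by omega)⟩
      · by_cases hgk : k ≤ 3^T ∧ 3^T < k + 3^(C*e+C)
        · -- k's window covers the defect: camouflage in the no-word
          set u := 3^T - k with hu'
          have hu : u < 3^(C*e+C) := by omega
          obtain ⟨hKmod, hKge, hKlt⟩ := levelFor_spec hP ((C*e+C)+1) f.val f.isLt
          set K := levelFor P ((C*e+C)+1) f.val with hK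
          obtain ⟨z, hz1, hz2, hz3⟩ := exists_exact_val K (j + 3^(C*e+C) + 1) (by omega)
          have hzbound : 2*3^K ≤ 2*3^((C*e+C)+P+1) := by
            have := pow3_le (show K ≤ (C*e+C)+P+1 by omega)
            omega
          have hKsmall : (3:ℕ)^((C*e+C)+P+1) ≤ 3^((C*e+C)+P+4) := pow3_le (by omega)
          refine ⟨z - u, by omega, by omega, ⟨by constructor <;> (intro h; omega), fun t ht c hc => ?_⟩⟩
          have e1 : k + t = 3^T - u + t := by omega
          rw [e1]
          exact camo_window P T hP R f hf hz3 hKge hKmod hu (by omega) t ht c hc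
        · -- k's window misses the defect: plain copy in the no-word
          have havoid : ∀ t < 3^(C*e+C), k + t ≠ 3^T := by
            intro t ht
            rcases not_and_or.mp hgk with h | h
            · push_neg at h; omega
            · push_neg at h; omega
          obtain ⟨k', hk1, hk2, hk3⟩ := window_rec hP (C*e+C) k (j+1) (by omega) (by omega)
          have hk2' : (3:ℕ)^((C*e+C)+P+2) ≤ 3^((C*e+C)+P+4) := pow3_le (by omega)
          refine ⟨k', by omega, by omega, ⟨by constructor <;> (intro h; omega), fun t ht c hc => ?_⟩⟩
          rw [yes_eq_no (havoid t ht)]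
          exact (hk3 t ht c).symm

end EF

end S6

namespace S6

/-! ### general level lemmas -/
section Levels
variable {AP : Type} (T : LTree AP)

lemma anc_root : {a | T.lt a T.root} = ∅ := by
  ext a
  simp only [Set.mem_setOf_eq, Set.mem_empty_iff_false, iff_false]
  intro h
  rcases T.root_min a with rfl | h2
  · exact T.lt_irrefl _ h
  · exact T.lt_irrefl _ (T.lt_trans _ _ _ h h2)

lemma level_root : T.level T.root = 0 := by
  unfold LTree.level
  simp [Set.Finite.toFinset_eq_empty, anc_root]

lemma root_of_level_zero {s : T.node} (h : T.level s = 0) : s = T.root := by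
  unfold LTree.level at h
  rw [Finset.card_eq_zero, Set.Finite.toFinset_eq_empty] at h
  rcases T.root_min s with rfl | h2
  · rfl
  · exact absurd (Set.eq_empty_iff_forall_notMem.mp h T.root) (by simp [h2])

lemma anc_dirAnc {t s : T.node} (h : T.DirAnc t s) :
    {a | T.lt a s} = insert t {a | T.lt a t} := by
  ext b
  simp only [Set.mem_setOf_eq, Set.mem_insert_iff]
  constructor
  · intro hb
    rcases T.anc_total s t b h.1 hb with rfl | h2 | h2
    · exact Or.inl rfl
    · exact absurd ⟨b, h2, hb⟩ h.2
    · exact Or.inr h2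
  · rintro (rfl | h2)
    · exact h.1
    · exact T.lt_trans _ _ _ h2 h.1

lemma level_dirAnc {t s : T.node} (h : T.DirAnc t s) : T.level s = T.level t + 1 := by
  classical
  unfold LTree.level
  have he : (T.anc_finite s).toFinset = insert t (T.anc_finite t).toFinset := by
    ext b
    simp [Set.Finite.mem_toFinset, anc_dirAnc T h]
  rw [he, Finset.card_insert_of_notMem (by simp [Set.Finite.mem_toFinset]; exact T.lt_irrefl t)]

/-- a finite totally-ordered set has a maximum -/
lemma exists_max {α : Type} (lt' : α → α → Prop)
    (htrans : ∀ a b c, lt' a b → lt' b c → lt' a c)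
    (F : Finset α) (hF : F.Nonempty)
    (htotal : ∀ a ∈ F, ∀ b ∈ F, a = b ∨ lt' a b ∨ lt' b a) :
    ∃ t ∈ F, ∀ b ∈ F, b = t ∨ lt' b t := by
  classical
  revert htotal hF
  induction F using Finset.induction_on with
  | empty => intro hF _; exact absurd hF (by simp)
  | @insert a F' ha ih =>
    intro hF htotal
    by_cases hF' : F'.Nonempty
    · obtain ⟨t, ht1, ht2⟩ := ih hF' (fun x hx y hy => htotal x (by simp [hx]) y (by simp [hy]))
      rcases htotal a (by simp) t (by simp [ht1]) with heq | h2 | h2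
      · refine ⟨t, by simp [ht1], ?_⟩
        intro b hb
        rcases Finset.mem_insert.mp hb with rfl | hb'
        · exact Or.inl heq
        · exact ht2 b hb'
      · refine ⟨t, by simp [ht1], ?_⟩
        intro b hb
        rcases Finset.mem_insert.mp hb with rfl | hb'
        · exact Or.inr h2
        · exact ht2 b hb'
      · refine ⟨a, by simp, ?_⟩
        intro b hb
        rcases Finset.mem_insert.mp hb with rfl | hb'
        · exact Or.inl rfl
        · rcases ht2 b hb' with rfl | h3
          · exact Or.inr h2
          · exact Or.inr (htrans _ _ _ h3 h2)
    · have hF'e : F' = ∅ := Finset.not_nonempty_iff_eq_empty.mp hF'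
      subst hF'e
      refine ⟨a, by simp, ?_⟩
      intro b hb; simp at hb; exact Or.inl hb

lemma exists_dirAnc {s : T.node} {n : ℕ} (h : T.level s = n + 1) :
    ∃ t, T.DirAnc t s ∧ T.level t = n := by
  have hne : ((T.anc_finite s).toFinset).Nonempty := by
    rw [← Finset.card_pos]
    unfold LTree.level at h
    omega
  obtain ⟨t, ht1, ht2⟩ := exists_max T.lt T.lt_trans _ hne (by
    intro a hx b hy
    simp only [Set.Finite.mem_toFinset, Set.mem_setOf_eq] at hx hy
    exact T.anc_total s a b hx hy)
  have htlt : T.lt t s := by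
    simpa [Set.Finite.mem_toFinset] using ht1
  have hda : T.DirAnc t s := by
    refine ⟨htlt, ?_⟩
    rintro ⟨c, hc1, hc2⟩
    rcases ht2 c (by simpa [Set.Finite.mem_toFinset] using hc2) with rfl | h3
    · exact T.lt_irrefl _ hc1
    · exact T.lt_irrefl _ (T.lt_trans _ _ _ hc1 h3)
  have := level_dirAnc T hda
  exact ⟨t, hda, by omega⟩

lemma level_pos_iff {s : T.node} : 0 < T.level s ↔ ∃ r, T.lt r s := by
  constructor
  · intro h
    obtain ⟨t, ht, _⟩ := exists_dirAnc T (show T.level s = (T.level s - 1) + 1 by omega)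
    exact ⟨t, ht.1⟩
  · rintro ⟨r, hr⟩
    unfold LTree.level
    rw [Finset.card_pos]
    exact ⟨r, by simpa [Set.Finite.mem_toFinset] using hr⟩

end Levels

/-! ### bisimulation transport -/
section Bisim
variable {AP : Type} {T₁ T₂ : LTree AP} (Rel : T₁.node → T₂.node → Prop)
  (hroot : Rel T₁.root T₂.root)
  (hstep : ∀ s u, Rel s u →
      T₁.label s = T₂.label u ∧
      (∀ s', T₁.DirAnc s s' → ∃ u', T₂.DirAnc u u' ∧ Rel s' u') ∧
      (∀ u', T₂.DirAnc u u' → ∃ s', T₁.DirAnc s s' ∧ Rel s' u'))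

include hroot hstep in
lemma transport₂ : ∀ (n : ℕ) (u : T₂.node), T₂.level u = n →
    ∃ s, Rel s u ∧ T₁.level s = n := by
  intro n
  induction n with
  | zero =>
    intro u hu
    rw [root_of_level_zero T₂ hu]
    exact ⟨T₁.root, hroot, level_root T₁⟩
  | succ n ih =>
    intro u hu
    obtain ⟨t, ht, htl⟩ := exists_dirAnc T₂ hu
    obtain ⟨s', hs'1, hs'2⟩ := ih t htl
    obtain ⟨s, hs1, hs2⟩ := (hstep s' t hs'1).2.2 u ht
    exact ⟨s, hs2, by rw [level_dirAnc T₁ hs1, hs'2]⟩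

include hroot hstep in
lemma transport₁ : ∀ (n : ℕ) (s : T₁.node), T₁.level s = n →
    ∃ u, Rel s u ∧ T₂.level u = n := by
  intro n
  induction n with
  | zero =>
    intro s hs
    rw [root_of_level_zero T₁ hs]
    exact ⟨T₂.root, hroot, level_root T₂⟩
  | succ n ih =>
    intro s hs
    obtain ⟨t, ht, htl⟩ := exists_dirAnc T₁ hs
    obtain ⟨u', hu'1, hu'2⟩ := ih t htl
    obtain ⟨u, hu1, hu2⟩ := (hstep t u' hu'1).2.1 s ht
    exact ⟨u, hu2, by rw [level_dirAnc T₂ hu1, hu'2]⟩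

end Bisim
end S6

/-! ### comb trees -/
namespace S6
section Comb
variable {AP : Type} (P : ℕ)

def cLT : Option (Fin P × ℕ) → Option (Fin P × ℕ) → Prop
  | none, none => False
  | none, some _ => True
  | some _, none => False
  | some x, some y => x.1 = y.1 ∧ x.2 < y.2

@[simp] lemma cLT_none_none : cLT P none none ↔ False := Iff.rfl
@[simp] lemma cLT_none_some (q : Fin P × ℕ) : cLT P none (some q) ↔ True := Iff.rfl
@[simp] lemma cLT_some_none (q : Fin P × ℕ) : cLT P (some q) none ↔ False := Iff.rfl
@[simp] lemma cLT_some_some (q q' : Fin P × ℕ) :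
    cLT P (some q) (some q') ↔ q.1 = q'.1 ∧ q.2 < q'.2 := Iff.rfl

def comb (hP : 0 < P) (A : ℕ → Fin P → Bool) : LTree AP where
  node := Option (Fin P × ℕ)
  lt := cLT P
  lt_irrefl := by rintro (_ | ⟨c,k⟩) <;> simp
  lt_trans := fun x y z h1 h2 => by
    match x, y, z with
    | none, none, _ => exact ((cLT_none_none P).mp h1).elim
    | some _, none, _ => exact ((cLT_some_none P _).mp h1).elim
    | none, some _, none => exact ((cLT_some_none P _).mp h2).elim
    | some _, some _, none => exact ((cLT_some_none P _).mp h2).elim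
    | none, some _, some _ => exact (cLT_none_some P _).mpr trivial
    | some q, some q', some q'' =>
      obtain ⟨e1, l1⟩ := (cLT_some_some P _ _).mp h1
      obtain ⟨e2, l2⟩ := (cLT_some_some P _ _).mp h2
      exact (cLT_some_some P _ _).mpr ⟨e1.trans e2, lt_trans l1 l2⟩
  root := none
  root_min := by
    rintro (_|⟨c,k⟩)
    · exact Or.inl rfl
    · exact Or.inr (by simp)
  anc_total := fun s x y h1 h2 => by
    match s, x, y with
    | none, none, _ => exact ((cLT_none_none P).mp h1).elim
    | none, some _, _ => exact ((cLT_some_none P _).mp h1).elim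
    | some q, none, none => exact Or.inl rfl
    | some q, none, some q2 => exact Or.inr (Or.inl ((cLT_none_some P _).mpr trivial))
    | some q, some q1, none => exact Or.inr (Or.inr ((cLT_none_some P _).mpr trivial))
    | some (c,k), some (a,m), some (b,n) =>
      obtain ⟨ha, hm⟩ := (cLT_some_some P _ _).mp h1
      obtain ⟨hb, hn⟩ := (cLT_some_some P _ _).mp h2
      simp only at ha hb hm hn
      rcases Nat.lt_trichotomy m n with h | h | h
      · exact Or.inr (Or.inl ((cLT_some_some P _ _).mpr ⟨by simp [ha, hb], h⟩))
      · exact Or.inl (by rw [ha.trans hb.symm, h])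
      · exact Or.inr (Or.inr ((cLT_some_some P _ _).mpr ⟨by simp [ha, hb], h⟩))
  anc_finite := by
    rintro (_|⟨c,k⟩)
    · convert Set.finite_empty
      ext (_|⟨a,m⟩) <;> simp
    · apply Set.Finite.subset (Set.Finite.insert none
        ((Set.finite_Iio k).image (fun j => some (c, j))))
      rintro (_|⟨a,m⟩) h
      · simp
      · rw [Set.mem_setOf_eq, cLT_some_some] at h
        obtain ⟨h1, h2⟩ := h
        simp only at h1 h2
        simp only [Set.mem_insert_iff, Set.mem_image, Set.mem_Iio]
        exact Or.inr ⟨m, h2, by simp [h1]⟩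
  succ_exists := by
    rintro (_|⟨c,k⟩)
    · refine ⟨some (⟨0, hP⟩, 0), by simp, ?_⟩
      rintro ⟨(_|⟨a,m⟩), h1, h2⟩
      · exact ((cLT_none_none P).mp h1).elim
      · exact absurd ((cLT_some_some P _ _).mp h2).2 (by omega)
    · refine ⟨some (c, k+1), by simp, ?_⟩
      rintro ⟨(_|⟨a,m⟩), h1, h2⟩
      · exact ((cLT_some_none P _).mp h1).elim
      · have := ((cLT_some_some P _ _).mp h1).2
        have := ((cLT_some_some P _ _).mp h2).2
        simp only at *
        omega
  label := fun x => match x with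
    | none => ∅
    | some (c, k) => if A (k+1) c then Set.univ else ∅

variable (hP : 0 < P) (A : ℕ → Fin P → Bool)

lemma comb_lt_def : (comb P hP A : LTree AP).lt = cLT P := rfl

lemma comb_dirAnc_none {x : Option (Fin P × ℕ)} :
    (comb P hP A : LTree AP).DirAnc none x ↔ ∃ c, x = some (c, 0) := by
  constructor
  · rintro ⟨h1, h2⟩
    rw [comb_lt_def] at h1
    match x with
    | none => exact ((cLT_none_none P).mp h1).elim
    | some (c, 0) => exact ⟨c, rfl⟩
    | some (c, m+1) =>
      refine absurd ⟨some (c, 0), ?_, ?_⟩ h2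
      · rw [comb_lt_def]; simp
      · rw [comb_lt_def]; simp
  · rintro ⟨c, rfl⟩
    refine ⟨by rw [comb_lt_def]; simp, ?_⟩
    rintro ⟨(_|⟨a,m⟩), h1, h2⟩
    · rw [comb_lt_def] at h1
      exact ((cLT_none_none P).mp h1).elim
    · rw [comb_lt_def, cLT_some_some] at h2
      exact absurd h2.2 (by omega)

lemma comb_dirAnc_some {c : Fin P} {k : ℕ} {x : Option (Fin P × ℕ)} :
    (comb P hP A : LTree AP).DirAnc (some (c,k)) x ↔ x = some (c, k+1) := by
  constructor
  · rintro ⟨h1, h2⟩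
    rw [comb_lt_def] at h1
    match x with
    | none => exact ((cLT_some_none P _).mp h1).elim
    | some (a, m) =>
      obtain ⟨he, hm⟩ := (cLT_some_some P _ _).mp h1
      simp only at he hm
      rcases Nat.lt_or_ge (k+1) m with h | h
      · refine absurd ⟨some (a, k+1), ?_, ?_⟩ h2
        · rw [comb_lt_def, cLT_some_some]; exact ⟨he, by omega⟩
        · rw [comb_lt_def, cLT_some_some]; exact ⟨rfl, h⟩
      · have : m = k + 1 := by omega
        rw [he, this]
  · rintro rfl
    refine ⟨by rw [comb_lt_def, cLT_some_some]; exact ⟨rfl, by omega⟩, ?_⟩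
    rintro ⟨(_|⟨a,m⟩), h1, h2⟩
    · rw [comb_lt_def] at h1
      exact ((cLT_some_none P _).mp h1).elim
    · rw [comb_lt_def, cLT_some_some] at h1 h2
      have := h1.2; have := h2.2
      simp only at *
      omega

/-- the branch paths of a comb -/
def pc (c : Fin P) : ℕ → Option (Fin P × ℕ)
  | 0 => none
  | (k+1) => some (c, k)

lemma comb_initPath_iff {p : ℕ → Option (Fin P × ℕ)} :
    (comb P hP A : LTree AP).InitPath p ↔ ∃ c, p = pc P c := by
  constructor
  · rintro ⟨hpath, h0⟩
    have h1 := hpath 0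
    rw [h0] at h1
    obtain ⟨c, hc⟩ := (comb_dirAnc_none P hP A).mp h1
    refine ⟨c, funext fun i => ?_⟩
    induction i with
    | zero => exact h0
    | succ m ih =>
      match m, ih with
      | 0, _ => simpa [pc] using hc
      | m+1, ih =>
        have h2 := hpath (m+1)
        rw [ih] at h2
        simpa [pc] using (comb_dirAnc_some P hP A).mp h2
  · rintro ⟨c, rfl⟩
    refine ⟨fun i => ?_, rfl⟩
    match i with
    | 0 => exact (comb_dirAnc_none P hP A).mpr ⟨c, rfl⟩
    | (m+1) => exact (comb_dirAnc_some P hP A).mpr rfl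

lemma comb_level_pc (c : Fin P) (i : ℕ) :
    (comb P hP A : LTree AP).level (pc P c i) = i := by
  induction i with
  | zero => exact level_root _
  | succ m ih =>
    have hd : (comb P hP A : LTree AP).DirAnc (pc P c m) (pc P c (m+1)) := by
      match m with
      | 0 => exact (comb_dirAnc_none P hP A).mpr ⟨c, rfl⟩
      | (k+1) => exact (comb_dirAnc_some P hP A).mpr rfl
    rw [level_dirAnc _ hd, ih]

lemma comb_label_mem (hA0 : ∀ c, A 0 c = false) (a' : AP) (c : Fin P) (i : ℕ) :
    a' ∈ (comb P hP A : LTree AP).label (pc P c i) ↔ A i c = true := by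
  match i with
  | 0 =>
    show a' ∈ (∅ : Set AP) ↔ _
    simp [hA0]
  | (k+1) =>
    show a' ∈ (if A (k+1) c then Set.univ else ∅) ↔ _
    by_cases h : A (k+1) c
    · simp [h]
    · simp [h]

end Comb
end S6

namespace S6
section Psi
variable {AP : Type}

/-- ψ := ∃x ( (∃y. y < x) ∧ ∀y (E(y,x) → P_a(y)) ) : some level ≥ 1 is uniformly
labeled by a -/
def psi (a : AP) : MSOE AP :=
  .exFO 0 (.not (.or
    (.not (.exFO 1 (.lt 1 0)))
    (.exFO 1 (.not (.or (.not (.el 1 0)) (.patom a 1))))))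

lemma psi_closed (a : AP) : (psi a).closed := by
  unfold MSOE.closed psi
  refine ⟨?_, ?_⟩ <;> simp [MSOE.freeFO, MSOE.freeSO] <;> decide

lemma modelsMPL_psi_iff (T : LTree AP) (a : AP) :
    MSOE.modelsMPL T (psi a) ↔
      ∃ s : T.node, (∃ r, T.lt r s) ∧ ∀ u, T.level u = T.level s → a ∈ T.label u := by
  unfold MSOE.modelsMPL psi
  simp [MSOE.sat, Function.update_apply]

end Psi
end S6

namespace S6


section PsiVal
variable {AP : Type}

lemma psi_bisim (a : AP) (T₁ T₂ : LTree AP) (h : Bisimilar T₁ T₂) :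
    MSOE.modelsMPL T₁ (psi a) ↔ MSOE.modelsMPL T₂ (psi a) := by
  obtain ⟨Rel, hroot, hstep⟩ := h
  rw [modelsMPL_psi_iff, modelsMPL_psi_iff]
  constructor
  · rintro ⟨s, hr, hall⟩
    obtain ⟨u, hu1, hu2⟩ := transport₁ Rel hroot hstep (T₁.level s) s rfl
    refine ⟨u, ?_, ?_⟩
    · rw [← level_pos_iff, hu2, level_pos_iff]
      exact hr
    · intro w hw
      obtain ⟨s', hs'1, hs'2⟩ := transport₂ Rel hroot hstep (T₂.level w) w rfl
      have hlab := (hstep s' w hs'1).1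
      rw [← hlab]
      exact hall s' (by rw [hs'2, hw, hu2])
  · rintro ⟨u, hr, hall⟩
    obtain ⟨s, hs1, hs2⟩ := transport₂ Rel hroot hstep (T₂.level u) u rfl
    refine ⟨s, ?_, ?_⟩
    · rw [← level_pos_iff, hs2, level_pos_iff]
      exact hr
    · intro w hw
      obtain ⟨u', hu'1, hu'2⟩ := transport₁ Rel hroot hstep (T₁.level w) w rfl
      have hlab := (hstep w u' hu'1).1
      rw [hlab]
      exact hall u' (by rw [hu'2, hw, hs2])

variable (P : ℕ) (hP : 0 < P)

lemma comb_level_some (A : ℕ → Fin P → Bool) (c : Fin P) (k : ℕ) :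
    (comb P hP A : LTree AP).level (some (c,k)) = k+1 :=
  comb_level_pc P hP A c (k+1)

lemma comb_level_none (A : ℕ → Fin P → Bool) :
    (comb P hP A : LTree AP).level none = 0 := level_root _

lemma yesA_zero (g : ℕ) (hg : 1 ≤ g) (c : Fin P) : yesA P g 0 c = false := by
  simp [yesA, noA]; omega

lemma noA_zero (c : Fin P) : noA P 0 c = false := by simp [noA]

lemma psi_yes (a : AP) (Texp : ℕ) :
    MSOE.modelsMPL (comb P hP (yesA P (3^Texp)) : LTree AP) (psi a) := by
  rw [modelsMPL_psi_iff]
  have hg : 1 ≤ 3^Texp := Nat.one_le_pow _ _ (by norm_num)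
  refine ⟨some (⟨0, hP⟩, 3^Texp - 1), ⟨none, by rw [comb_lt_def]; simp⟩, ?_⟩
  rintro (_|⟨c,k⟩) hu
  · rw [comb_level_none, comb_level_some] at hu
    exact absurd hu (by omega)
  · rw [comb_level_some, comb_level_some] at hu
    have hk : k + 1 = 3^Texp := by omega
    have : a ∈ (comb P hP (yesA P (3^Texp)) : LTree AP).label (pc P c (k+1)) := by
      rw [comb_label_mem P hP _ (fun c => yesA_zero P (3^Texp) hg c) a c (k+1)]
      simp [yesA, hk]
    simpa [pc] using this

lemma psi_no (a : AP) : ¬ MSOE.modelsMPL (comb P hP (noA P) : LTree AP) (psi a) := by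
  rw [modelsMPL_psi_iff]
  rintro ⟨s, ⟨r, hr⟩, hall⟩
  match s with
  | none =>
    rw [comb_lt_def] at hr
    match r with
    | none => exact ((cLT_none_none P).mp hr).elim
    | some q => exact ((cLT_some_none P q).mp hr).elim
  | some (c, k) =>
    set cv : Fin P := ⟨v3 (k+1) % P, Nat.mod_lt _ hP⟩ with hcv
    have h1 : a ∈ (comb P hP (noA P) : LTree AP).label (some (cv, k)) := by
      apply hall
      rw [comb_level_some, comb_level_some]
    have h2 : a ∈ (comb P hP (noA P) : LTree AP).label (pc P cv (k+1)) := by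
      simpa [pc] using h1
    rw [comb_label_mem P hP _ (fun c => noA_zero P c) a cv (k+1)] at h2
    simp [noA, hcv] at h2

end PsiVal
end S6

namespace S6

/-! ### HCTL machinery -/

def dep {AP : Type} : HCTL AP → ℕ
  | .atom _ _ => 0
  | .not φ => dep φ
  | .or φ ψ => max (dep φ) (dep ψ)
  | .next φ => dep φ + 1
  | .untl φ ψ => max (dep φ) (dep ψ) + 1
  | .ex _ φ => dep φ

def fv {AP : Type} : HCTL AP → Finset ℕ
  | .atom _ π => {π}
  | .not φ => fv φ
  | .or φ ψ => fv φ ∪ fv ψ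
  | .next φ => fv φ
  | .untl φ ψ => fv φ ∪ fv ψ
  | .ex π φ => fv φ ∪ {π}

section Transfer
variable {AP : Type} (P : ℕ) (hP : 0 < P) (A : ℕ → Fin P → Bool)

lemma sat_ex_zero (V : ℕ → ℕ → Option (Fin P × ℕ)) (π : ℕ) (φ : HCTL AP) (e₀ : Fin P) :
    HCTL.sat (comb P hP A) V (pc P e₀) 0 (.ex π φ) ↔
      ∃ c, HCTL.sat (comb P hP A) (Function.update V π (pc P c)) (pc P c) 0 φ := by
  show (∃ p, _ ∧ _ ∧ _) ↔ _
  constructor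
  · rintro ⟨p, hp, _, hsat⟩
    obtain ⟨c, rfl⟩ := (comb_initPath_iff P hP A).mp hp
    exact ⟨c, hsat⟩
  · rintro ⟨c, hsat⟩
    refine ⟨pc P c, (comb_initPath_iff P hP A).mpr ⟨c, rfl⟩, ?_, hsat⟩
    intro j hj
    have : j = 0 := by omega
    subst this
    rfl

lemma sat_ex_pos (V : ℕ → ℕ → Option (Fin P × ℕ)) (π : ℕ) (φ : HCTL AP) (e₀ : Fin P)
    (i : ℕ) (hi : 1 ≤ i) :
    HCTL.sat (comb P hP A) V (pc P e₀) i (.ex π φ) ↔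
      HCTL.sat (comb P hP A) (Function.update V π (pc P e₀)) (pc P e₀) i φ := by
  show (∃ p, _ ∧ _ ∧ _) ↔ _
  constructor
  · rintro ⟨p, hp, hagree, hsat⟩
    obtain ⟨c, rfl⟩ := (comb_initPath_iff P hP A).mp hp
    have h1 : pc P c 1 = pc P e₀ 1 := hagree 1 hi
    have hc : c = e₀ := by
      have := h1
      simp only [pc, Option.some.injEq, Prod.mk.injEq] at this
      exact this.1
    subst hc
    exact hsat
  · intro hsat
    exact ⟨pc P e₀, (comb_initPath_iff P hP A).mpr ⟨e₀, rfl⟩, fun j _ => rfl, hsat⟩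

lemma update_comp (V : ℕ → Fin P) (π : ℕ) (c : Fin P) :
    Function.update (fun π' => pc P (V π')) π (pc P c) =
      fun π' => pc P (Function.update V π c π') := by
  funext π'
  by_cases h : π' = π
  · subst h; simp
  · simp [Function.update_of_ne h]

theorem transfer (C Texp : ℕ) (hC : 2*P+20 ≤ C) (φ : HCTL AP) :
    ∀ (e : ℕ), dep φ ≤ e → C*e+C ≤ Texp →
    ∀ (R : Finset (Fin P)), R.card < P → (fv φ).card + 2 ≤ P →
    ∀ (V : ℕ → Fin P), (∀ π ∈ fv φ, V π ∈ R) →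
    ∀ e₀, e₀ ∈ R → ∀ i j, REL P C Texp R e i j →
    (HCTL.sat (comb P hP (yesA P (3^Texp))) (fun π => pc P (V π)) (pc P e₀) i φ ↔
     HCTL.sat (comb P hP (noA P)) (fun π => pc P (V π)) (pc P e₀) j φ) := by
  have hC0 : 0 < C := by omega
  induction φ with
  | atom a' π =>
    intro e he hT R hcard hfv V hV e₀ he₀ i j hrel
    show a' ∈ (comb P hP (yesA P (3^Texp)) : LTree AP).label (pc P (V π) i) ↔
         a' ∈ (comb P hP (noA P) : LTree AP).label (pc P (V π) j)
    rw [comb_label_mem P hP _ (fun c => yesA_zero P (3^Texp) (Nat.one_le_pow _ _ (by norm_num)) c) a' (V π) i,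
        comb_label_mem P hP _ (fun c => noA_zero P c) a' (V π) j]
    have h0 := hrel.2 0 (by positivity) (V π) (hV π (by simp [fv]))
    simp only [Nat.add_zero] at h0
    rw [h0]
  | not φ ih =>
    intro e he hT R hcard hfv V hV e₀ he₀ i j hrel
    show ¬ _ ↔ ¬ _
    exact not_congr (ih e he hT R hcard hfv V hV e₀ he₀ i j hrel)
  | or φ₁ φ₂ ih₁ ih₂ =>
    intro e he hT R hcard hfv V hV e₀ he₀ i j hrel
    show _ ∨ _ ↔ _ ∨ _
    have hsub₁ : fv φ₁ ⊆ fv (HCTL.or φ₁ φ₂) := Finset.subset_union_left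
    have hsub₂ : fv φ₂ ⊆ fv (HCTL.or φ₁ φ₂) := Finset.subset_union_right
    exact or_congr
      (ih₁ e (by simp [dep] at he; omega) hT R hcard
        (by have := Finset.card_le_card hsub₁; omega) V (fun π h => hV π (hsub₁ h)) e₀ he₀ i j hrel)
      (ih₂ e (by simp [dep] at he; omega) hT R hcard
        (by have := Finset.card_le_card hsub₂; omega) V (fun π h => hV π (hsub₂ h)) e₀ he₀ i j hrel)
  | next φ ih =>
    intro e he hT R hcard hfv V hV e₀ he₀ i j hrel
    obtain ⟨e', rfl⟩ : ∃ e', e = e'+1 := ⟨e-1, by simp [dep] at he; omega⟩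
    show HCTL.sat _ _ _ (i+1) φ ↔ HCTL.sat _ _ _ (j+1) φ
    exact ih e' (by simp [dep] at he; omega) (by nlinarith [hC0]) R hcard hfv V hV e₀ he₀
      (i+1) (j+1) (REL_next P C Texp hC0 R e' i j hrel)
  | untl φ₁ φ₂ ih₁ ih₂ =>
    intro e he hT R hcard hfv V hV e₀ he₀ i j hrel
    obtain ⟨e', rfl⟩ : ∃ e', e = e'+1 := ⟨e-1, by simp [dep] at he; omega⟩
    have hf : ∃ f, f ∉ R := by
      by_contra h
      push_neg at h
      have : R = Finset.univ := Finset.eq_univ_iff_forall.mpr h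
      rw [this, Finset.card_univ, Fintype.card_fin] at hcard
      omega
    obtain ⟨f, hf⟩ := hf
    have hsub₁ : fv φ₁ ⊆ fv (HCTL.untl φ₁ φ₂) := Finset.subset_union_left
    have hsub₂ : fv φ₂ ⊆ fv (HCTL.untl φ₁ φ₂) := Finset.subset_union_right
    have hd₁ : dep φ₁ ≤ e' := by simp [dep] at he; omega
    have hd₂ : dep φ₂ ≤ e' := by simp [dep] at he; omega
    have hT' : C*e'+C ≤ Texp := by nlinarith [hC0]
    have hTT : C*e'+C+C ≤ Texp := by nlinarith [hC0]
    show (∃ i', i ≤ i' ∧ _ ∧ _) ↔ (∃ j', j ≤ j' ∧ _ ∧ _)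
    constructor
    · rintro ⟨i', hi1, hi2, hi3⟩
      obtain ⟨j', hj1, hrel', hmid⟩ := FORTH P C Texp hP hC R f hf e' i j i' hTT hrel hi1
      refine ⟨j', hj1, ?_, ?_⟩
      · exact (ih₂ e' hd₂ hT' R hcard (by have := Finset.card_le_card hsub₂; omega) V
          (fun π h => hV π (hsub₂ h)) e₀ he₀ i' j' hrel').mp hi2
      · intro k' hk1 hk2
        obtain ⟨k, hk3, hk4, hrelk⟩ := hmid k' hk1 hk2
        exact (ih₁ e' hd₁ hT' R hcard (by have := Finset.card_le_card hsub₁; omega) V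
          (fun π h => hV π (hsub₁ h)) e₀ he₀ k k' hrelk).mp (hi3 k hk3 hk4)
    · rintro ⟨j', hj1, hj2, hj3⟩
      obtain ⟨i', hi1, hrel', hmid⟩ := BACK P C Texp hP hC R f hf e' i j j' hTT hrel hj1
      refine ⟨i', hi1, ?_, ?_⟩
      · exact (ih₂ e' hd₂ hT' R hcard (by have := Finset.card_le_card hsub₂; omega) V
          (fun π h => hV π (hsub₂ h)) e₀ he₀ i' j' hrel').mpr hj2
      · intro k hk1 hk2
        obtain ⟨k', hk3, hk4, hrelk⟩ := hmid k hk1 hk2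
        exact (ih₁ e' hd₁ hT' R hcard (by have := Finset.card_le_card hsub₁; omega) V
          (fun π h => hV π (hsub₁ h)) e₀ he₀ k k' hrelk).mpr (hj3 k' hk3 hk4)
  | ex π φ ih =>
    intro e he hT R hcard hfv V hV e₀ he₀ i j hrel
    have hsub : fv φ ⊆ fv (HCTL.ex π φ) := Finset.subset_union_left
    have hfv' : (fv φ).card + 2 ≤ P := by have := Finset.card_le_card hsub; omega
    by_cases hi : i = 0
    · have hj : j = 0 := hrel.1.mp hi
      subst hi; subst hj
      rw [sat_ex_zero P hP _ _ π φ e₀, sat_ex_zero P hP _ _ π φ e₀]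
      apply exists_congr
      intro c
      erw [update_comp P V π c]
      set R' : Finset (Fin P) := ((fv φ).image (Function.update V π c)) ∪ {c} with hR'
      have hcard' : R'.card < P := by
        have h1 : R'.card ≤ ((fv φ).image (Function.update V π c)).card + 1 := by
          rw [hR']
          exact le_trans (Finset.card_union_le _ _) (by simp)
        have h2 : ((fv φ).image (Function.update V π c)).card ≤ (fv φ).card :=
          Finset.card_image_le
        omega
      exact ih e (by simp [dep] at he; omega) hT R' hcard' hfv'
        (Function.update V π c)
        (fun π' h => Finset.mem_union_left _ (Finset.mem_image_of_mem _ h))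
        c (Finset.mem_union_right _ (Finset.mem_singleton_self c)) 0 0
        (REL_zero P C Texp R' e hT)
    · have hj : j ≠ 0 := fun h => hi (hrel.1.mpr h)
      rw [sat_ex_pos P hP _ _ π φ e₀ i (by omega), sat_ex_pos P hP _ _ π φ e₀ j (by omega)]
      erw [update_comp P V π e₀]
      exact ih e (by simp [dep] at he; omega) hT R hcard hfv'
        (Function.update V π e₀)
        (fun π' h => by
          by_cases hππ : π' = π
          · subst hππ; simpa using he₀
          · rw [Function.update_of_ne hππ]; exact hV π' (hsub h))
        e₀ he₀ i j hrel

end Transfer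
end S6

namespace S6

lemma no_hctl {AP : Type} (a : AP) :
    ¬ ∃ φ : HCTL AP, ∀ T : LTree AP, HCTL.models T φ ↔ MSOE.modelsMPL T (psi a) := by
  rintro ⟨φ, hφ⟩
  set P := (fv φ).card + 2 with hPdef
  have hP : 0 < P := by omega
  set C := 2*P+20 with hCdef
  set d := dep φ with hd
  set Texp := C*d+C with hTdef
  have hyes : HCTL.models (comb P hP (yesA P (3^Texp)) : LTree AP) φ :=
    (hφ _).mpr (psi_yes P hP a Texp)
  have hno : ¬ HCTL.models (comb P hP (noA P) : LTree AP) φ :=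
    fun h => psi_no P hP a ((hφ _).mp h)
  apply hno
  intro p hp
  obtain ⟨c, rfl⟩ := (comb_initPath_iff P hP (noA P)).mp hp
  have hY : HCTL.sat (comb P hP (yesA P (3^Texp)) : LTree AP)
      (fun _ => pc P c) (pc P c) 0 φ :=
    hyes (pc P c) ((comb_initPath_iff P hP _).mpr ⟨c, rfl⟩)
  exact (transfer P hP C Texp (by omega) φ d (le_refl _) (by omega)
    {c} (by rw [Finset.card_singleton]; omega) (by omega)
    (fun _ => c) (fun π _ => Finset.mem_singleton_self c)
    c (Finset.mem_singleton_self c) 0 0 (REL_zero P C Texp {c} d (by omega))).mp hY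

end S6

/-- MPL[E] is strictly more expressive than HyperCTL*, even
when restricted to bisimulation-invariant properties. -/
theorem mplE_strictly_more_expressive_than_hyperCTLStar (AP : Type)
    [Fintype AP] [Nonempty AP] :
    ∃ ψ : MSOE AP, ψ.closed ∧
      (∀ T₁ T₂ : LTree AP, Bisimilar T₁ T₂ →
        (MSOE.modelsMPL T₁ ψ ↔ MSOE.modelsMPL T₂ ψ)) ∧
      ¬ ∃ φ : HCTL AP, ∀ T : LTree AP,
          HCTL.models T φ ↔ MSOE.modelsMPL T ψ := by
  have a : AP := Classical.arbitrary AP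
  exact ⟨S6.psi a, S6.psi_closed a, fun T₁ T₂ h => S6.psi_bisim a T₁ T₂ h, S6.no_hctl a⟩
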